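/- Let f : 2^N → ℝ be a 3-increasing set function on a finite ground set N. Then for all distinct elements x, y ∈ N and all sets S, T ⊆ N with {x, y} ∩ (S ∪ T) = ∅, one has I_f({x}; {y} | S) ≥ I_f({x}; {y} | S ∪ T). -/

import Mathlib

open Finset

/-- The marginal value `f(A | C) := f(A ∪ C) - f(C)` of a set function. -/
def margS {V : Type*} [DecidableEq V] (f : Finset V → ℝ) (A C : Finset V) : ℝ :=
  f (A ∪ C) - f C

/-- The conditional mutual coverage `I_f(A; B | C) := f(A|C) + f(B|C) - f(A ∪ B | C)`. -/
def mutcov {V : Type*} [DecidableEq V] (f : Finset V → ℝ) (A B C : Finset V) : ℝ :=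
  margS f A C + margS f B C - margS f (A ∪ B) C

/-- The derivative of a set function `f` with respect to a set `A`:
`(df/dA)(S) := ∑_{B ⊆ A} (−1)^{|B|} f((S ∪ A) \ B)`. -/
def setDeriv {V : Type*} [DecidableEq V] (f : Finset V → ℝ) (A S : Finset V) : ℝ :=
  ∑ B ∈ A.powerset, (-1 : ℝ) ^ B.card * f ((S ∪ A) \ B)

lemma key_deriv {V : Type*} [DecidableEq V] (f : Finset V → ℝ) (x y z : V) (C : Finset V)
    (hxy : x ≠ y) (hxz : x ≠ z) (hyz : y ≠ z) (hx : x ∉ C) (hy : y ∉ C) (hz : z ∉ C) :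
    setDeriv f {x, y, z} C = mutcov f {x} {y} C - mutcov f {x} {y} (insert z C) := by
  have hx' : x ∉ ({y, z} : Finset V) := by simp [hxy, hxz]
  have hy' : y ∉ ({z} : Finset V) := by simp [hyz]
  have e1 : (C ∪ {x, y, z}) \ (∅ : Finset V) = {x} ∪ {y} ∪ insert z C := by
    ext a; simp; tauto
  have e2 : (C ∪ {x, y, z}) \ {x} = {y} ∪ insert z C := by
    ext a
    by_cases hax : a = x <;> by_cases hay : a = y <;> by_cases haz : a = z <;>
      simp_all
  have e3 : (C ∪ {x, y, z}) \ {y} = {x} ∪ insert z C := by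
    ext a
    by_cases hax : a = x <;> by_cases hay : a = y <;> by_cases haz : a = z <;>
      simp_all
  have e4 : (C ∪ {x, y, z}) \ {z} = {x} ∪ {y} ∪ C := by
    ext a
    by_cases hax : a = x <;> by_cases hay : a = y <;> by_cases haz : a = z <;>
      simp_all
  have e5 : (C ∪ {x, y, z}) \ {x, y} = insert z C := by
    ext a
    by_cases hax : a = x <;> by_cases hay : a = y <;> by_cases haz : a = z <;>
      simp_all
  have e6 : (C ∪ {x, y, z}) \ {x, z} = {y} ∪ C := by
    ext a
    by_cases hax : a = x <;> by_cases hay : a = y <;> by_cases haz : a = z <;>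
      simp_all
  have e7 : (C ∪ {x, y, z}) \ ({y, z} : Finset V) = {x} ∪ C := by
    ext a
    by_cases hax : a = x <;> by_cases hay : a = y <;> by_cases haz : a = z <;>
      simp_all
  have e8 : (C ∪ {x, y, z}) \ ({x, y, z} : Finset V) = C := by
    ext a
    by_cases hax : a = x <;> by_cases hay : a = y <;> by_cases haz : a = z <;>
      simp_all
  unfold setDeriv mutcov margS
  rw [show ({x, y, z} : Finset V) = insert x {y, z} from rfl,
    Finset.sum_powerset_insert hx',
    show ({y, z} : Finset V) = insert y {z} from rfl,
    Finset.sum_powerset_insert hy', Finset.sum_powerset_insert hy',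
    show ({z} : Finset V) = insert z ∅ from rfl]
  simp only [Finset.sum_powerset_insert (Finset.notMem_empty z),
    Finset.powerset_empty, Finset.sum_singleton]
  simp only [LawfulSingleton.insert_empty_eq]
  rw [show insert x ({z} : Finset V) = {x, z} from rfl,
      show insert x ({y} : Finset V) = {x, y} from rfl,
      show insert x ({y, z} : Finset V) = {x, y, z} from rfl,
      show insert y ({z} : Finset V) = {y, z} from rfl]
  rw [e1, e2, e3, e4, e5, e6, e7, e8]
  have c1 : ({x} : Finset V).card = 1 := by simp
  have c2 : ({y} : Finset V).card = 1 := by simp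
  have c3 : ({z} : Finset V).card = 1 := by simp
  have c4 : ({x, y} : Finset V).card = 2 := by rw [card_insert_of_notMem (by simp [hxy])]; simp
  have c5 : ({x, z} : Finset V).card = 2 := by rw [card_insert_of_notMem (by simp [hxz])]; simp
  have c6 : ({y, z} : Finset V).card = 2 := by rw [card_insert_of_notMem (by simp [hyz])]; simp
  have c7 : ({x, y, z} : Finset V).card = 3 := by
    rw [card_insert_of_notMem hx', card_insert_of_notMem hy']; simp
  rw [c1, c2, c3, c4, c5, c6, c7]
  simp only [card_empty, pow_zero, pow_one]
  ring

lemma key_step {V : Type*} [Fintype V] [DecidableEq V] (f : Finset V → ℝ)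
    (h3 : ∀ (S A : Finset V), A.card = 3 → 0 ≤ setDeriv f A S)
    (x y z : V) (C : Finset V)
    (hxy : x ≠ y) (hxz : x ≠ z) (hyz : y ≠ z) (hx : x ∉ C) (hy : y ∉ C) (hz : z ∉ C) :
    mutcov f {x} {y} (insert z C) ≤ mutcov f {x} {y} C := by
  have hx' : x ∉ ({y, z} : Finset V) := by simp [hxy, hxz]
  have hy' : y ∉ ({z} : Finset V) := by simp [hyz]
  have hc : ({x, y, z} : Finset V).card = 3 := by
    rw [card_insert_of_notMem hx', card_insert_of_notMem hy']; simp
  have := h3 C {x, y, z} hc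
  rw [key_deriv f x y z C hxy hxz hyz hx hy hz] at this
  linarith

/-- For `3`-increasing set functions, mutual coverage does not increase upon conditioning:
`I_f({x};{y} | S) ≥ I_f({x};{y} | S ∪ T)` whenever `{x,y}` is disjoint from `S ∪ T`. -/
theorem mutcov_antitone_of_three_increasing {V : Type*} [Fintype V] [DecidableEq V]
    (f : Finset V → ℝ)
    (h3 : ∀ (S A : Finset V), A.card = 3 → 0 ≤ setDeriv f A S)
    (x y : V) (hxy : x ≠ y) (S T : Finset V)
    (hdisj : ({x, y} : Finset V) ∩ (S ∪ T) = ∅) :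
    mutcov f {x} {y} (S ∪ T) ≤ mutcov f {x} {y} S := by
  induction T using Finset.induction with
  | empty => simp
  | @insert z T hzT ih =>
    have hd := Finset.eq_empty_iff_forall_notMem.mp hdisj
    have hx : x ∉ S ∪ insert z T := fun h => hd x (mem_inter.mpr ⟨by simp, h⟩)
    have hy : y ∉ S ∪ insert z T := fun h => hd y (mem_inter.mpr ⟨by simp, h⟩)
    have hdisj' : ({x, y} : Finset V) ∩ (S ∪ T) = ∅ := by
      rw [Finset.eq_empty_iff_forall_notMem]
      intro a ha
      simp only [mem_inter, mem_union, mem_insert, mem_singleton] at ha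
      rcases ha with ⟨hxy', hst⟩
      rcases hxy' with rfl | rfl
      · exact hx (by simp at hst ⊢; tauto)
      · exact hy (by simp at hst ⊢; tauto)
    have ih' := ih hdisj'
    have heq : S ∪ insert z T = insert z (S ∪ T) := Finset.union_insert z S T
    by_cases hzST : z ∈ S ∪ T
    · rw [heq, Finset.insert_eq_self.mpr hzST]; exact ih'
    · have hxz : x ≠ z := by rintro rfl; exact hx (by simp)
      have hyz : y ≠ z := by rintro rfl; exact hy (by simp)
      have hxST : x ∉ S ∪ T := fun h => hx (by simp at h ⊢; tauto)
      have hyST : y ∉ S ∪ T := fun h => hy (by simp at h ⊢; tauto)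
      rw [heq]
      exact le_trans (key_step f h3 x y z (S ∪ T) hxy hxz hyz hxST hyST hzST) ih'
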